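/- (Keller–Osserman bound.) Let n ≥ 3. There is a constant C = C(n) > 0 such that for every open set O ⊊ ℝ^n and every C² function u : O → ℝ with u > 0 and Δu = u^{(n+2)/(n-2)} on O, one has u(x) ≤ C · dist(x, ℝ^n \ O)^{-(n-2)/2} for all x ∈ O. -/

import Mathlib

open Metric Set MeasureTheory Filter Topology

noncomputable def lap {n : ℕ} (u : EuclideanSpace ℝ (Fin n) → ℝ) (x : EuclideanSpace ℝ (Fin n)) : ℝ :=
  ∑ i : Fin n, fderiv ℝ (fun y => fderiv ℝ u y (EuclideanSpace.single i 1)) x (EuclideanSpace.single i 1)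


lemma lemA {g : ℝ → ℝ} {c : ℝ}
    (hmax : IsLocalMax g 0) (hdiff : ∀ᶠ t in 𝓝 (0:ℝ), DifferentiableAt ℝ g t)
    (hdd : HasDerivAt (deriv g) c 0) : c ≤ 0 := by
  by_contra hc
  push_neg at hc
  have h0 : deriv g 0 = 0 := hmax.deriv_eq_zero
  have hslope : Tendsto (slope (deriv g) 0) (𝓝[≠] 0) (𝓝 c) :=
    hasDerivAt_iff_tendsto_slope.1 hdd
  have hev : ∀ᶠ t in 𝓝[≠] (0:ℝ), 0 < slope (deriv g) 0 t :=
    hslope.eventually (eventually_gt_nhds hc)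
  -- upgrade to a δ
  have hev2 : ∀ᶠ t in 𝓝 (0:ℝ), (t ≠ 0 → 0 < slope (deriv g) 0 t) ∧ DifferentiableAt ℝ g t ∧ g t ≤ g 0 := by
    refine ((eventually_nhdsWithin_iff.1 hev).and (hdiff.and hmax)).mono ?_
    intro t ht
    exact ⟨fun h => ht.1 h, ht.2.1, ht.2.2⟩
  obtain ⟨δ, hδ, hball⟩ := Metric.eventually_nhds_iff.1 hev2
  have hsub : Icc (0:ℝ) (δ/2) ⊆ Metric.ball (0:ℝ) δ := by
    intro t ht
    simp only [Metric.mem_ball, Real.dist_eq, sub_zero]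
    rw [abs_of_nonneg ht.1]
    linarith [ht.2, hδ]
  have hmono : StrictMonoOn g (Icc (0:ℝ) (δ/2)) := by
    apply strictMonoOn_of_deriv_pos (convex_Icc _ _)
    · intro t ht
      exact ((hball (by simpa [Real.dist_eq, abs_of_nonneg ht.1] using by nlinarith [ht.1, ht.2, hδ] : dist t (0:ℝ) < δ)).2.1).continuousAt.continuousWithinAt
    · intro t ht
      rw [interior_Icc] at ht
      have htb : dist t (0:ℝ) < δ := by
        simp only [Real.dist_eq, sub_zero]
        rw [abs_of_pos ht.1]; linarith [ht.2]
      have hs := (hball htb).1 (ne_of_gt ht.1)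
      rw [slope_def_field] at hs
      have : 0 < (deriv g t - deriv g 0) / (t - 0) := hs
      rw [h0, sub_zero, sub_zero] at this
      have := mul_pos this ht.1
      rwa [div_mul_cancel₀] at this
      exact ne_of_gt ht.1
  have h1 : g 0 < g (δ/2) := hmono ⟨le_refl _, by linarith⟩ ⟨by linarith, le_refl _⟩ (by linarith)
  have h2 : g (δ/2) ≤ g 0 := (hball (by rw [Real.dist_eq, sub_zero, abs_of_nonneg (by linarith : (0:ℝ) ≤ δ/2)]; linarith)).2.2
  linarith

lemma lemC {n : ℕ} {h : EuclideanSpace ℝ (Fin n) → ℝ} {x0 : EuclideanSpace ℝ (Fin n)}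
    (hc : ContDiffAt ℝ 2 h x0) (hmax : IsLocalMax h x0) (e : EuclideanSpace ℝ (Fin n)) :
    fderiv ℝ (fun y => fderiv ℝ h y e) x0 e ≤ 0 := by
  -- differentiability of h in a neighborhood
  obtain ⟨U, hUmem, hUdiff⟩ : ∃ U ∈ 𝓝 x0, ContDiffOn ℝ 1 h U := hc.contDiffOn (by norm_num) (by simp)
  obtain ⟨V, hVU, hVopen, hVx0⟩ := _root_.mem_nhds_iff.1 hUmem
  have hdiffat : ∀ y ∈ V, DifferentiableAt ℝ h y := fun y hy =>
    ((hUdiff.mono hVU).differentiableOn one_ne_zero).differentiableAt (hVopen.mem_nhds hy)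
  set φ : ℝ → EuclideanSpace ℝ (Fin n) := fun t => x0 + t • e with hφdef
  have hφ : ∀ t : ℝ, HasDerivAt φ e t := by
    intro t
    simpa [hφdef] using ((hasDerivAt_id t).smul_const e).const_add x0
  have hφ0 : φ 0 = x0 := by simp [hφdef]
  have hφcont : Continuous φ := by fun_prop
  set G : EuclideanSpace ℝ (Fin n) → ℝ := fun y => fderiv ℝ h y e with hGdef
  have hGdiff : DifferentiableAt ℝ G x0 := by
    have h1 : ContDiffAt ℝ 1 (fderiv ℝ h) x0 := hc.fderiv_right (by norm_num)
    exact (ContinuousLinearMap.apply ℝ ℝ e).differentiableAt.comp x0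
      (h1.differentiableAt one_ne_zero)
  set g : ℝ → ℝ := fun t => h (φ t) with hgdef
  have hgmax : IsLocalMax g 0 := by
    have ht : Filter.Tendsto φ (𝓝 0) (𝓝 x0) := by
      rw [← hφ0]; exact hφcont.continuousAt
    have hev := ht.eventually hmax
    refine hev.mono fun t htt => ?_
    simpa [hgdef, hφ0] using htt
  have hev0 : ∀ᶠ t in 𝓝 (0:ℝ), φ t ∈ V := by
    have ht : Filter.Tendsto φ (𝓝 0) (𝓝 x0) := by
      rw [← hφ0]; exact hφcont.continuousAt
    exact ht.eventually (hVopen.mem_nhds hVx0)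
  have hkey : ∀ t : ℝ, φ t ∈ V → HasDerivAt g (G (φ t)) t := fun t htV =>
    ((hdiffat (φ t) htV).hasFDerivAt).comp_hasDerivAt t (hφ t)
  have hgd : ∀ᶠ t in 𝓝 (0:ℝ), DifferentiableAt ℝ g t :=
    hev0.mono fun t htV => (hkey t htV).differentiableAt
  have hderiv_eq : deriv g =ᶠ[𝓝 (0:ℝ)] fun t => G (φ t) :=
    hev0.mono fun t htV => (hkey t htV).deriv
  have hcomp : HasDerivAt (fun t => G (φ t)) (fderiv ℝ G x0 e) 0 := by
    have h2 : HasFDerivAt G (fderiv ℝ G x0) (φ 0) := by rw [hφ0]; exact hGdiff.hasFDerivAt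
    exact h2.comp_hasDerivAt 0 (hφ 0)
  have hdd : HasDerivAt (deriv g) (fderiv ℝ G x0 e) 0 :=
    hcomp.congr_of_eventuallyEq hderiv_eq
  exact lemA hgmax hgd hdd

section barrier
variable {n : ℕ} (z : EuclideanSpace ℝ (Fin n))

lemma hasFDerivAt_ssq (y : EuclideanSpace ℝ (Fin n)) :
    HasFDerivAt (fun w : EuclideanSpace ℝ (Fin n) => ∑ i, (w i - z i)^2)
      (∑ i, (2*(y i - z i)) • (EuclideanSpace.proj i : EuclideanSpace ℝ (Fin n) →L[ℝ] ℝ)) y := by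
  apply HasFDerivAt.fun_sum
  intro i _
  have hd : HasDerivAt (fun t : ℝ => (t - z i)^2) (2*(y i - z i)) (y i) := by
    simpa using ((hasDerivAt_id (y i)).sub_const (z i)).fun_pow 2
  have hp : HasFDerivAt (fun w : EuclideanSpace ℝ (Fin n) => w i)
      (EuclideanSpace.proj i : EuclideanSpace ℝ (Fin n) →L[ℝ] ℝ) y :=
    (EuclideanSpace.proj (𝕜 := ℝ) i).hasFDerivAt
  exact hd.comp_hasFDerivAt y hp

lemma ssq_eval (a : Fin n → ℝ) (j : Fin n) :
    (∑ i, (2*(a i)) • (EuclideanSpace.proj i : EuclideanSpace ℝ (Fin n) →L[ℝ] ℝ))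
      (EuclideanSpace.single j 1) = 2 * a j := by
  simp only [ContinuousLinearMap.sum_apply, ContinuousLinearMap.smul_apply,
    PiLp.proj_apply, EuclideanSpace.single_apply, smul_eq_mul, mul_ite, mul_one, mul_zero]
  rw [Finset.sum_ite_eq' Finset.univ j (fun i => 2 * a i)]
  simp

lemma contDiff_ssq : ContDiff ℝ 2 (fun w : EuclideanSpace ℝ (Fin n) => ∑ i, (w i - z i)^2) := by
  apply ContDiff.sum
  intro i _
  exact ((EuclideanSpace.proj (𝕜 := ℝ) i).contDiff.sub contDiff_const).pow 2

lemma contDiffAt_barrier (x0 : EuclideanSpace ℝ (Fin n)) (r A pp : ℝ)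
    (hlt : ∑ i, (x0 i - z i)^2 < r^2) :
    ContDiffAt ℝ 2 (fun y => A * (r^2 - ∑ i, (y i - z i)^2) ^ (-pp)) x0 := by
  have h1 : ContDiffAt ℝ 2 (fun y : EuclideanSpace ℝ (Fin n) => r^2 - ∑ i, (y i - z i)^2) x0 :=
    (contDiff_const.sub (contDiff_ssq z)).contDiffAt
  have h2 : ContDiffAt ℝ 2 (fun t : ℝ => t ^ (-pp)) (r^2 - ∑ i, (x0 i - z i)^2) :=
    Real.contDiffAt_rpow_const_of_ne (by nlinarith : (r^2 - ∑ i, (x0 i - z i)^2) ≠ 0)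
  have h3 := h2.comp x0 h1
  exact contDiffAt_const.mul h3
end barrier


section barrier
variable {n : ℕ} (z : EuclideanSpace ℝ (Fin n))

lemma lap_barrier (x0 : EuclideanSpace ℝ (Fin n)) (r A pp : ℝ)
    (hlt : ∑ i, (x0 i - z i)^2 < r^2) :
    lap (fun y => A * (r^2 - ∑ i, (y i - z i)^2) ^ (-pp)) x0 =
      4*(A*pp*(pp+1)*((r^2 - ∑ i, (x0 i - z i)^2) ^ (-pp-2))) * (∑ i, (x0 i - z i)^2)
      + 2*(n:ℝ)*(A*pp*((r^2 - ∑ i, (x0 i - z i)^2) ^ (-pp-1))) := by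
  set s : EuclideanSpace ℝ (Fin n) → ℝ := fun y => ∑ i, (y i - z i)^2 with hsdef
  have hscont : Continuous s := by
    apply continuous_finset_sum
    intro i _
    fun_prop
  set W : Set (EuclideanSpace ℝ (Fin n)) := {y | s y < r^2} with hWdef
  have hWopen : IsOpen W := isOpen_lt hscont continuous_const
  have hWx0 : x0 ∈ W := hlt
  have hW : W ∈ 𝓝 x0 := hWopen.mem_nhds hWx0
  set Ls : EuclideanSpace ℝ (Fin n) → (EuclideanSpace ℝ (Fin n) →L[ℝ] ℝ) :=
    fun y => ∑ i, (2*(y i - z i)) • (EuclideanSpace.proj i : EuclideanSpace ℝ (Fin n) →L[ℝ] ℝ)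
    with hLsdef
  set f1 : EuclideanSpace ℝ (Fin n) → ℝ := fun y => A*pp*((r^2 - s y) ^ (-pp-1)) with hf1def
  -- first derivative of v on W
  have step1 : ∀ y ∈ W, HasFDerivAt (fun y => A * (r^2 - s y) ^ (-pp)) ((f1 y) • Ls y) y := by
    intro y hy
    have hby : 0 < r^2 - s y := by have hy' : s y < r^2 := hy; linarith
    have h1 : HasDerivAt (fun t : ℝ => r^2 - t) (-1) (s y) := by
      simpa using (hasDerivAt_id (s y)).const_sub (r^2)
    have h2 : HasDerivAt (fun b : ℝ => b ^ (-pp)) ((-pp) * (r^2 - s y) ^ (-pp-1)) (r^2 - s y) :=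
      Real.hasDerivAt_rpow_const (Or.inl hby.ne')
    have h3 : HasDerivAt (fun t : ℝ => A * (r^2 - t) ^ (-pp))
        (f1 y) (s y) := by
      have := ((h2.comp (s y) h1).const_mul A)
      refine this.congr_deriv ?_
      simp [hf1def]; ring
    exact h3.comp_hasFDerivAt y (hasFDerivAt_ssq z y)
  -- the summand functions agree with an explicit formula near x0
  have step3 : ∀ i : Fin n,
      (fun y => fderiv ℝ (fun y => A * (r^2 - s y) ^ (-pp)) y (EuclideanSpace.single i 1))
        =ᶠ[𝓝 x0] (fun y => f1 y * (2*(y i - z i))) := by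
    intro i
    filter_upwards [hW] with y hy
    rw [(step1 y hy).fderiv]
    simp only [ContinuousLinearMap.smul_apply, smul_eq_mul, hLsdef]
    rw [ssq_eval]
  -- second derivative
  have hb0 : 0 < r^2 - s x0 := by have h' : s x0 < r^2 := hWx0; linarith
  set c2 : ℝ := A*pp*(pp+1)*((r^2 - s x0) ^ (-pp-2)) with hc2def
  have hf1 : HasFDerivAt f1 (c2 • Ls x0) x0 := by
    have h1 : HasDerivAt (fun t : ℝ => r^2 - t) (-1) (s x0) := by
      simpa using (hasDerivAt_id (s x0)).const_sub (r^2)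
    have h2 : HasDerivAt (fun b : ℝ => b ^ (-pp-1)) ((-pp-1) * (r^2 - s x0) ^ (-pp-1-1)) (r^2 - s x0) :=
      Real.hasDerivAt_rpow_const (Or.inl hb0.ne')
    have h3 : HasDerivAt (fun t : ℝ => A*pp*((r^2 - t) ^ (-pp-1))) c2 (s x0) := by
      have := ((h2.comp (s x0) h1).const_mul (A*pp))
      refine this.congr_deriv ?_
      rw [hc2def]
      have : -pp-1-1 = -pp-2 := by ring
      rw [this]; ring
    exact h3.comp_hasFDerivAt x0 (hasFDerivAt_ssq z x0)
  have step4 : ∀ i : Fin n,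
      fderiv ℝ (fun y => f1 y * (2*(y i - z i))) x0 (EuclideanSpace.single i 1)
        = f1 x0 * 2 + (2*(x0 i - z i)) * (c2 * (2*(x0 i - z i))) := by
    intro i
    have hf2 : HasFDerivAt (fun y : EuclideanSpace ℝ (Fin n) => 2*(y i - z i))
        ((2:ℝ) • (EuclideanSpace.proj i : EuclideanSpace ℝ (Fin n) →L[ℝ] ℝ)) x0 := by
      have hp : HasFDerivAt (fun w : EuclideanSpace ℝ (Fin n) => w i - z i)
          (EuclideanSpace.proj i : EuclideanSpace ℝ (Fin n) →L[ℝ] ℝ) x0 :=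
        (EuclideanSpace.proj (𝕜 := ℝ) i).hasFDerivAt.sub_const (z i)
      exact hp.const_mul 2
    have hmul : HasFDerivAt (fun y => f1 y * (2*(y i - z i))) _ x0 := hf1.mul hf2
    rw [hmul.fderiv]
    simp only [ContinuousLinearMap.add_apply, ContinuousLinearMap.smul_apply, smul_eq_mul,
      PiLp.proj_apply, EuclideanSpace.single_apply, hLsdef]
    rw [ssq_eval]
    simp
  -- assemble
  have hlapeq : lap (fun y => A * (r^2 - s y) ^ (-pp)) x0
      = ∑ i : Fin n, (f1 x0 * 2 + (2*(x0 i - z i)) * (c2 * (2*(x0 i - z i)))) := by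
    unfold lap
    apply Finset.sum_congr rfl
    intro i _
    rw [(step3 i).fderiv_eq, step4 i]
  rw [hlapeq]
  rw [Finset.sum_add_distrib, Finset.sum_const]
  have : ∑ i : Fin n, (2*(x0 i - z i)) * (c2 * (2*(x0 i - z i)))
      = 4 * c2 * s x0 := by
    rw [hsdef, Finset.mul_sum]
    apply Finset.sum_congr rfl
    intro i _
    ring
  rw [this]
  simp only [Finset.card_univ, Fintype.card_fin, nsmul_eq_mul]
  rw [hc2def, hf1def]
  ring
end barrier

set_option maxHeartbeats 1000000 in
/-- **Keller–Osserman bound**: there is a dimensional constant `C > 0` such that every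
positive `C²` solution of `Δu = u^{(n+2)/(n-2)}` on a proper open set `O ⊆ ℝⁿ` satisfies
`u(x) ≤ C · dist(x, Oᶜ)^{-(n-2)/2}`. -/
theorem statement2 (n : ℕ) (hn : 3 ≤ n) :
    ∃ C : ℝ, 0 < C ∧
      ∀ O : Set (EuclideanSpace ℝ (Fin n)), IsOpen O → O ≠ univ →
      ∀ u : EuclideanSpace ℝ (Fin n) → ℝ,
        ContDiffOn ℝ 2 u O → (∀ x ∈ O, 0 < u x) →
        (∀ x ∈ O, lap u x = u x ^ (((n:ℝ) + 2) / ((n:ℝ) - 2))) →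
        ∀ x ∈ O, u x ≤ C / infDist x Oᶜ ^ (((n:ℝ) - 2) / 2) := by
  have hn3 : (3:ℝ) ≤ (n:ℝ) := by exact_mod_cast hn
  set pp : ℝ := ((n:ℝ) - 2) / 2 with hppdef
  set qq : ℝ := ((n:ℝ) + 2) / ((n:ℝ) - 2) with hqqdef
  have hpp : 0 < pp := by rw [hppdef]; linarith
  have hqq : 0 < qq := by rw [hqqdef]; apply div_pos <;> linarith
  set K : ℝ := 4*pp*(pp+1) + 2*(n:ℝ)*pp with hKdef
  have hK : 0 < K := by rw [hKdef]; nlinarith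
  set bb : ℝ := ((n:ℝ) - 2) / 4 with hbbdef
  have hbb : 0 < bb := by rw [hbbdef]; linarith
  refine ⟨K ^ bb * (2:ℝ) ^ pp, mul_pos (Real.rpow_pos_of_pos hK bb) (Real.rpow_pos_of_pos two_pos pp), ?_⟩
  set C : ℝ := K ^ bb * (2:ℝ) ^ pp with hCdef
  intro O hOopen hOne u hu hupos hlapu x hxO
  -- geometry
  have hOcne : Oᶜ.Nonempty := nonempty_compl.2 hOne
  have hR : 0 < infDist x Oᶜ :=
    (hOopen.isClosed_compl.notMem_iff_infDist_pos hOcne).1 (by simpa using hxO)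
  set R : ℝ := infDist x Oᶜ with hRdef
  set r : ℝ := R / 2 with hrdef
  have hr : 0 < r := by rw [hrdef]; linarith
  have hballO : closedBall x r ⊆ O := by
    intro y hy
    by_contra hyO
    have h1 : R ≤ dist x y := infDist_le_dist_of_mem (by simpa using hyO)
    rw [mem_closedBall, dist_comm] at hy
    rw [hrdef] at hy
    linarith
  -- bound of u on the closed ball
  obtain ⟨ym, hym, hymax⟩ := (isCompact_closedBall x r).exists_isMaxOn
    ⟨x, mem_closedBall_self hr.le⟩ ((hu.continuousOn).mono hballO)
  set M : ℝ := u ym with hMdef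
  have hM : ∀ y ∈ closedBall x r, u y ≤ M := fun y hy => hymax hy
  -- barrier
  set A : ℝ := (K * r^2) ^ bb with hAdef
  have hA : 0 < A := Real.rpow_pos_of_pos (by positivity) bb
  set s : EuclideanSpace ℝ (Fin n) → ℝ := fun y => ∑ i, (y i - x i)^2 with hsdef
  have hs0 : ∀ y, 0 ≤ s y := fun y => Finset.sum_nonneg fun i _ => sq_nonneg _
  have hsx : s x = 0 := by simp [hsdef]
  have hsd : ∀ y, s y = (dist y x)^2 := by
    intro y
    rw [EuclideanSpace.dist_eq, Real.sq_sqrt (Finset.sum_nonneg fun i _ => sq_nonneg _)]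
    simp [hsdef, Real.dist_eq, sq_abs]
  have hmem_iff : ∀ y, y ∈ ball x r ↔ s y < r^2 := by
    intro y
    rw [mem_ball, hsd y, dist_comm]
    constructor
    · intro h; nlinarith [dist_nonneg (x := x) (y := y)]
    · intro h; nlinarith [dist_nonneg (x := x) (y := y)]
  set v : EuclideanSpace ℝ (Fin n) → ℝ := fun y => A * (r^2 - s y) ^ (-pp) with hvdef
  have hvpos : ∀ y ∈ ball x r, 0 < v y := by
    intro y hy
    have : 0 < r^2 - s y := by have := (hmem_iff y).1 hy; linarith
    exact mul_pos hA (Real.rpow_pos_of_pos this _)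
  -- subsolution property of the barrier
  have hsub : ∀ x0 ∈ ball x r, lap v x0 ≤ (v x0) ^ qq := by
    intro x0 hx0
    have hslt : s x0 < r^2 := (hmem_iff x0).1 hx0
    have hb0 : 0 < r^2 - s x0 := by linarith
    have hlap := lap_barrier x x0 r A pp hslt
    have hbr : r^2 - s x0 ≤ r^2 := by linarith [hs0 x0]
    set b0 : ℝ := r^2 - s x0 with hb0def
    have hB2 : (0:ℝ) < b0 ^ (-pp-2) := Real.rpow_pos_of_pos hb0 _
    have hsplit : b0 ^ (-pp-1) = b0 ^ (-pp-2) * b0 := by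
      have h1 : -pp-1 = (-pp-2) + 1 := by ring
      rw [h1, Real.rpow_add hb0, Real.rpow_one]
    have hlap' : lap v x0 = 4*(A*pp*(pp+1)*(b0 ^ (-pp-2))) * (s x0)
        + 2*(n:ℝ)*(A*pp*(b0 ^ (-pp-1))) := hlap
    have hvq : (v x0) ^ qq = (A*K*r^2) * b0 ^ (-pp-2) := by
      have hv0 : v x0 = A * b0 ^ (-pp) := rfl
      rw [hv0, Real.mul_rpow hA.le (Real.rpow_pos_of_pos hb0 _).le,
        ← Real.rpow_mul hb0.le]
      have he : -pp * qq = -pp-2 := by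
        rw [hppdef, hqqdef]
        have : (n:ℝ) - 2 ≠ 0 := by linarith
        field_simp
        ring
      rw [he]
      have hA2 : A ^ qq = A * (K * r^2) := by
        have h1 : qq = 1 + (qq - 1) := by ring
        rw [h1, Real.rpow_add hA, Real.rpow_one]
        have h2 : A ^ (qq - 1) = K * r^2 := by
          rw [hAdef, ← Real.rpow_mul (by positivity)]
          have h3 : bb * (qq-1) = 1 := by
            rw [hbbdef, hqqdef]
            have : (n:ℝ) - 2 ≠ 0 := by linarith
            field_simp
            ring
          rw [h3, Real.rpow_one]
        rw [h2]
      rw [hA2]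
      ring
    rw [hlap', hvq, hsplit]
    set B : ℝ := b0 ^ (-pp-2) with hBdef
    have hgoal : 4*(A*pp*(pp+1)*B) * (s x0) + 2*(n:ℝ)*(A*pp*(B*b0)) ≤ A*K*r^2*B := by
      have hnn : (0:ℝ) ≤ (n:ℝ) := by positivity
      have e1 : 0 ≤ A*pp*(pp+1)*B*b0 :=
        mul_nonneg (mul_nonneg (mul_nonneg (mul_nonneg hA.le hpp.le)
          (by linarith : (0:ℝ) ≤ pp+1)) hB2.le) hb0.le
      have e2 : 0 ≤ (n:ℝ)*A*pp*B*(s x0) :=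
        mul_nonneg (mul_nonneg (mul_nonneg (mul_nonneg hnn hA.le) hpp.le) hB2.le) (hs0 x0)
      have hb0eq : b0 = r^2 - s x0 := hb0def
      rw [hb0eq] at e1
      rw [hKdef, hb0eq]
      nlinarith [e1, e2]
    exact hgoal
  -- main comparison: u x ≤ v x
  have hballO' : ball x r ⊆ O := ball_subset_closedBall.trans hballO
  have hux : u x ≤ v x := by
    by_contra hcon
    push_neg at hcon
    set h : EuclideanSpace ℝ (Fin n) → ℝ := fun y => u y - v y with hhdef
    have hxball : x ∈ ball x r := mem_ball_self hr
    have hhx : 0 < h x := by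
      have : h x = u x - v x := by rw [hhdef]
      linarith
    set M' : ℝ := M - h x with hM'def
    have huxM : u x ≤ M := hM x (mem_closedBall_self hr.le)
    have hvxM : v x ≤ M' := by
      have h1 : h x = u x - v x := by rw [hhdef]
      rw [hM'def]; linarith
    have hM'pos : 0 < M' := lt_of_lt_of_le (hvpos x hxball) hvxM
    set d0 : ℝ := (A/M') ^ (1/pp) with hd0def
    have hd0pos : 0 < d0 := Real.rpow_pos_of_pos (div_pos hA hM'pos) _
    have hclaim : ∀ y ∈ ball x r, h x ≤ h y → s y ≤ r^2 - d0 := by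
      intro y hy hhy
      have hby : 0 < r^2 - s y := by have := (hmem_iff y).1 hy; linarith
      have hvy : v y ≤ M' := by
        have h1 : u y ≤ M := hM y (ball_subset_closedBall hy)
        have h2 : h y = u y - v y := by rw [hhdef]
        rw [hM'def]; linarith
      have hvyb : A * (r^2 - s y) ^ (-pp) ≤ M' := hvy
      have h1 : A ≤ M' * (r^2 - s y) ^ pp := by
        have hmul := mul_le_mul_of_nonneg_right hvyb (Real.rpow_pos_of_pos hby pp).le
        rwa [mul_assoc, ← Real.rpow_add hby, neg_add_cancel, Real.rpow_zero, mul_one] at hmul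
      have h2 : A / M' ≤ (r^2 - s y) ^ pp := by
        rw [div_le_iff₀ hM'pos]; linarith
      have h3 : d0 ≤ r^2 - s y := by
        have h4 := Real.rpow_le_rpow (div_pos hA hM'pos).le h2 (by positivity : (0:ℝ) ≤ 1/pp)
        rwa [← Real.rpow_mul hby.le, mul_one_div_cancel hpp.ne', Real.rpow_one] at h4
      linarith
    set Kc : Set (EuclideanSpace ℝ (Fin n)) := {y | s y ≤ r^2 - d0} with hKcdef
    have hscont : Continuous s := by
      apply continuous_finset_sum
      intro i _
      fun_prop
    have hKcclosed : IsClosed Kc := isClosed_le hscont continuous_const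
    have hKcball : Kc ⊆ ball x r := by
      intro y hy
      rw [hmem_iff]
      have : s y ≤ r^2 - d0 := hy
      linarith
    have hvcont : ContinuousOn v (ball x r) := fun y hy =>
      ((contDiffAt_barrier x y r A pp ((hmem_iff y).1 hy)).continuousAt).continuousWithinAt
    have hhcont : ContinuousOn h (ball x r) :=
      (hu.continuousOn.mono hballO').sub hvcont
    set KK : Set (EuclideanSpace ℝ (Fin n)) := Kc ∩ h ⁻¹' (Ici (h x)) with hKKdef
    have hKKball : KK ⊆ ball x r := fun y hy => hKcball hy.1
    have hKKclosed : IsClosed KK :=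
      (hhcont.mono hKcball).preimage_isClosed_of_isClosed hKcclosed isClosed_Ici
    have hKKcomp : IsCompact KK := (isCompact_closedBall x r).of_isClosed_subset hKKclosed
      (hKKball.trans ball_subset_closedBall)
    have hxKK : x ∈ KK := ⟨hclaim x hxball le_rfl, mem_preimage.2 (mem_Ici.2 le_rfl)⟩
    obtain ⟨x0, hx0K, hx0max⟩ := hKKcomp.exists_isMaxOn ⟨x, hxKK⟩ (hhcont.mono hKKball)
    have hx0ball : x0 ∈ ball x r := hKKball hx0K
    have hx0O : x0 ∈ O := hballO' hx0ball
    have hhx0 : h x ≤ h x0 := hx0K.2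
    have hlocmax : IsLocalMax h x0 := by
      filter_upwards [isOpen_ball.mem_nhds hx0ball] with y hy
      by_cases hcase : h x ≤ h y
      · exact hx0max ⟨hclaim y hy hcase, mem_preimage.2 (mem_Ici.2 hcase)⟩
      · push_neg at hcase; linarith
    have hucd : ContDiffAt ℝ 2 u x0 := hu.contDiffAt (hOopen.mem_nhds hx0O)
    have hvcd : ContDiffAt ℝ 2 v x0 := contDiffAt_barrier x x0 r A pp ((hmem_iff x0).1 hx0ball)
    have hhcd : ContDiffAt ℝ 2 h x0 := hucd.sub hvcd
    have hsummand : ∀ i : Fin n,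
        fderiv ℝ (fun y => fderiv ℝ u y (EuclideanSpace.single i 1)) x0 (EuclideanSpace.single i 1)
        - fderiv ℝ (fun y => fderiv ℝ v y (EuclideanSpace.single i 1)) x0 (EuclideanSpace.single i 1)
          ≤ 0 := by
      intro i
      have hev : (fun y => fderiv ℝ h y (EuclideanSpace.single i 1)) =ᶠ[𝓝 x0]
          (fun y => fderiv ℝ u y (EuclideanSpace.single i 1)
            - fderiv ℝ v y (EuclideanSpace.single i 1)) := by
        filter_upwards [isOpen_ball.mem_nhds hx0ball] with y hy
        have hud : DifferentiableAt ℝ u y :=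
          (hu.contDiffAt (hOopen.mem_nhds (hballO' hy))).differentiableAt (by norm_num)
        have hvd : DifferentiableAt ℝ v y :=
          (contDiffAt_barrier x y r A pp ((hmem_iff y).1 hy)).differentiableAt (by norm_num)
        have : fderiv ℝ h y = fderiv ℝ u y - fderiv ℝ v y := fderiv_sub hud hvd
        rw [this]
        simp
      have hGu : DifferentiableAt ℝ
          (fun y => fderiv ℝ u y (EuclideanSpace.single i 1)) x0 :=
        ((hucd.fderiv_right (m := 1) (by norm_num)).differentiableAt one_ne_zero).clm_apply
          (differentiableAt_const _)
      have hGv : DifferentiableAt ℝ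
          (fun y => fderiv ℝ v y (EuclideanSpace.single i 1)) x0 :=
        ((hvcd.fderiv_right (m := 1) (by norm_num)).differentiableAt one_ne_zero).clm_apply
          (differentiableAt_const _)
      have hcc := lemC hhcd hlocmax (EuclideanSpace.single i 1)
      rw [hev.fderiv_eq] at hcc
      rw [fderiv_fun_sub hGu hGv] at hcc
      simpa using hcc
    have hlapineq : lap u x0 ≤ lap v x0 := by
      have h1 : lap u x0 - lap v x0 = ∑ i : Fin n,
          (fderiv ℝ (fun y => fderiv ℝ u y (EuclideanSpace.single i 1)) x0 (EuclideanSpace.single i 1)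
          - fderiv ℝ (fun y => fderiv ℝ v y (EuclideanSpace.single i 1)) x0 (EuclideanSpace.single i 1)) := by
        unfold lap
        rw [← Finset.sum_sub_distrib]
      have h2 : (∑ i : Fin n,
          (fderiv ℝ (fun y => fderiv ℝ u y (EuclideanSpace.single i 1)) x0 (EuclideanSpace.single i 1)
          - fderiv ℝ (fun y => fderiv ℝ v y (EuclideanSpace.single i 1)) x0 (EuclideanSpace.single i 1))) ≤ 0 :=
        Finset.sum_nonpos fun i _ => hsummand i
      linarith
    have h1 : u x0 ^ qq ≤ v x0 ^ qq := by
      rw [← hlapu x0 hx0O]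
      exact hlapineq.trans (hsub x0 hx0ball)
    have h2 : v x0 < u x0 := by
      have h3 : h x0 = u x0 - v x0 := by rw [hhdef]
      linarith
    have h3 : v x0 ^ qq < u x0 ^ qq :=
      Real.rpow_lt_rpow (hvpos x0 hx0ball).le h2 hqq
    linarith
  -- final computation of v x
  have hvx : v x = C / R ^ pp := by
    have h1 : v x = A * ((r^2:ℝ)) ^ (-pp) := by
      have : v x = A * (r^2 - s x) ^ (-pp) := rfl
      rw [this, hsx, sub_zero]
    have h2 : A = K ^ bb * ((r^2:ℝ)) ^ bb := by
      rw [hAdef, Real.mul_rpow hK.le (by positivity)]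
    have h3 : ((r^2:ℝ)) ^ bb * ((r^2:ℝ)) ^ (-pp) = ((r^2:ℝ)) ^ (bb + -pp) :=
      (Real.rpow_add (by positivity) _ _).symm
    have h4 : bb + -pp = -bb := by rw [hbbdef, hppdef]; ring
    have h5 : ((r^2:ℝ)) ^ (-bb) = r ^ (-pp) := by
      rw [← Real.rpow_natCast r 2, ← Real.rpow_mul hr.le]
      congr 1
      rw [hbbdef, hppdef]
      push_cast
      ring
    have h6 : r ^ (-pp) = R ^ (-pp) * (2:ℝ) ^ pp := by
      rw [hrdef, Real.div_rpow hR.le (by norm_num),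
        Real.rpow_neg (by norm_num : (0:ℝ) ≤ 2), div_eq_mul_inv, inv_inv]
    rw [h1, h2, mul_assoc, h3, h4, h5, h6, Real.rpow_neg hR.le, hCdef]
    ring
  rw [hvx] at hux
  exact hux
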